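/- Let p be a prime and n, k positive integers with n ≥ kp. Let u_1, ..., u_k, v_1, ..., v_k ∈ {1, ..., n} satisfy u_i ≠ u_j for i ≠ j, v_i ≠ v_j for i ≠ j, and u_i ≠ v_j for i ≠ j. Then there exists a permutation σ of {1, ..., n} with σ(u_i) = v_i for all 1 ≤ i ≤ k and σ^p = identity. -/

import Mathlib

theorem exists_perm_of_order_dvd_prime_mapping
    (p : ℕ) (hp : p.Prime) (k n : ℕ) (hk : 0 < k) (hn : k * p ≤ n)
    (u v : Fin k → Fin n)
    (hu : Function.Injective u) (hv : Function.Injective v)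
    (huv : ∀ i j : Fin k, i ≠ j → u i ≠ v j) :
    ∃ σ : Equiv.Perm (Fin n), (∀ i, σ (u i) = v i) ∧ σ ^ p = 1 := by
  classical
  haveI : NeZero p := ⟨hp.ne_zero⟩
  have hp2 : 2 ≤ p := hp.two_le
  have h01 : (0 : Fin p) ≠ 1 := by
    have : ((0 : Fin p) : ℕ) ≠ ((1 : Fin p) : ℕ) := by
      simp [Fin.val_one', Nat.mod_eq_of_lt hp2]
    exact fun h => this (by rw [h])
  -- the model permutation on Fin k × Fin p
  set f : Fin k → Equiv.Perm (Fin p) :=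
    fun i => if u i = v i then 1 else Equiv.addRight 1 with hf
  let c : Equiv.Perm (Fin k × Fin p) := Equiv.prodShear (Equiv.refl (Fin k)) f
  have hc_apply : ∀ x : Fin k × Fin p, c x = (x.1, f x.1 x.2) := fun x => rfl
  have hc_pow : ∀ (m : ℕ) (x : Fin k × Fin p), (c ^ m) x = (x.1, (f x.1 ^ m) x.2) := by
    intro m
    induction m with
    | zero => intro x; simp
    | succ m ih =>
      intro x
      rw [pow_succ, Equiv.Perm.mul_apply, ih, pow_succ, Equiv.Perm.mul_apply]
      rfl
  have hc_p : c ^ p = 1 := by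
    ext x
    · rw [hc_pow]
      simp
    · rw [hc_pow]
      simp only [hf]
      by_cases h : u x.1 = v x.1
      · simp [h]
      · simp only [h, if_false, Equiv.nsmul_addRight]
        have hp1 : p • (1 : Fin p) = 0 := by simpa using card_nsmul_eq_zero (G := Fin p) (x := 1)
        simp [nsmul_eq_mul, Fin.natCast_self, hp1]
  -- the partial assignment
  set g₀ : Fin k × Fin p → Fin n := fun x => if x.2 = 1 then v x.1 else u x.1 with hg₀
  set D : Set (Fin k × Fin p) :=
    {x | x.2 = 0 ∨ (x.2 = 1 ∧ u x.1 ≠ v x.1)} with hD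
  have hg₀u : ∀ i : Fin k, g₀ (i, 0) = u i := by
    intro i; simp [hg₀, h01]
  have hg₀v : ∀ i : Fin k, g₀ (i, 1) = v i := by
    intro i; simp [hg₀]
  have hinj : Set.InjOn g₀ D := by
    rintro ⟨i, s⟩ (hs | ⟨hs, hsne⟩) ⟨j, t⟩ (ht | ⟨ht, htne⟩) hgij <;>
        subst hs <;> subst ht <;>
        simp only [hg₀, h01, h01.symm, if_true, if_false, if_neg h01] at hgij
    · exact Prod.ext (hu hgij) rfl
    · exfalso
      by_cases hij : i = j
      · exact htne (hij ▸ hgij)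
      · exact huv i j hij hgij
    · exfalso
      by_cases hij : i = j
      · exact hsne (hij ▸ hgij.symm)
      · exact huv j i (Ne.symm hij) hgij.symm
    · exact Prod.ext (hv hgij) rfl
  -- choose a target set of the right cardinality
  have hs₀ : (D.toFinset.image g₀).card ≤ k * p := by
    calc (D.toFinset.image g₀).card ≤ D.toFinset.card := Finset.card_image_le
      _ ≤ Fintype.card (Fin k × Fin p) := Finset.card_le_univ _
      _ = k * p := by simp
  obtain ⟨t, hst, -, htcard⟩ :=
    Finset.exists_subsuperset_card_eq (D.toFinset.image g₀).subset_univ hs₀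
      (by simpa using hn)
  have hαt : Fintype.card (Fin k × Fin p) = t.card := by
    simp [Fintype.card_prod, htcard]
  have hmaps : D.MapsTo g₀ t := by
    intro x hx
    exact hst (Finset.mem_image_of_mem g₀ (Set.mem_toFinset.mpr hx))
  obtain ⟨g, hg⟩ := Set.MapsTo.exists_equiv_extend_of_card_eq hαt hmaps hinj
  set F : (Fin k × Fin p) ↪ Fin n :=
    g.toEmbedding.trans (Function.Embedding.subtype _) with hF
  have hFD : ∀ x ∈ D, F x = g₀ x := fun x hx => hg x hx
  refine ⟨c.viaEmbedding F, ?_, ?_⟩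
  · intro i
    have h0D : ((i, (0 : Fin p)) : Fin k × Fin p) ∈ D := Or.inl rfl
    have hu0 : F (i, 0) = u i := by rw [hFD _ h0D, hg₀u]
    rw [← hu0, Equiv.Perm.viaEmbedding_apply, hc_apply]
    by_cases h : u i = v i
    · simp only [hf, h, if_true, Equiv.Perm.one_apply]
      rw [hu0, h]
    · have : f i 0 = 1 := by simp [hf, h]
      rw [this, hFD _ (Or.inr ⟨rfl, h⟩), hg₀v]
  · have : c.viaEmbedding F = Equiv.Perm.viaEmbeddingHom F c := rfl
    rw [this, ← map_pow, hc_p, map_one]
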